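/- Let M be an SNP matrix with MEC(M) = d, let M' be obtained from M (of dimensions n×m) by making m+1 copies of every row, and let r ∈ {0,1}^m. Then MEC(M' ∪ {r}) = (m+1)d + min over (H₁,H₂) ∈ OptPairs(M) of min(d(r,H₁), d(r,H₂)). -/
import Mathlib


open Finset

/-- A row of an SNP matrix: entries in {0,1,-} (`none` is a hole). -/
abbrev Row (m : ℕ) := Fin m → Option Bool

/-- A haplotype: a hole-free binary string. -/
abbrev Hap (m : ℕ) := Fin m → Bool

/-- `dist r H`: the number of positions where `r` has a non-hole value differing from `H`. -/
def dist {m : ℕ} (r : Row m) (H : Hap m) : ℕ :=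
  (univ.filter (fun j => r j ≠ none ∧ r j ≠ some (H j))).card

/-- `DM M H₁ H₂ = Σ over rows r of M of min(d(r,H₁), d(r,H₂))`. -/
def DM {m : ℕ} (M : Multiset (Row m)) (H1 H2 : Hap m) : ℕ :=
  (M.map (fun r => min (dist r H1) (dist r H2))).sum

/-- MEC(M): the minimum of `DM M H₁ H₂` over all haplotype pairs. -/
noncomputable def MEC {m : ℕ} (M : Multiset (Row m)) : ℕ :=
  sInf {v : ℕ | ∃ H1 H2 : Hap m, DM M H1 H2 = v}

/-- The set of optimal haplotype pairs for `M`. -/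
def OptPairs {m : ℕ} (M : Multiset (Row m)) : Set (Hap m × Hap m) :=
  {p | DM M p.1 p.2 = MEC M}


lemma dist_le {m : ℕ} (r : Row m) (H : Hap m) : dist r H ≤ m := by
  have h := Finset.card_filter_le (univ : Finset (Fin m)) (fun j => r j ≠ none ∧ r j ≠ some (H j))
  exact le_trans h (by simp)

lemma DM_cons {m : ℕ} (r : Row m) (M : Multiset (Row m)) (H1 H2 : Hap m) :
    DM (r ::ₘ M) H1 H2 = min (dist r H1) (dist r H2) + DM M H1 H2 := by
  simp [DM]

lemma DM_smul {m : ℕ} (n : ℕ) (M : Multiset (Row m)) (H1 H2 : Hap m) :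
    DM (n • M) H1 H2 = n * DM M H1 H2 := by
  simp [DM, Multiset.map_nsmul, Multiset.sum_nsmul]

lemma MEC_mem {m : ℕ} (M : Multiset (Row m)) :
    ∃ H1 H2 : Hap m, DM M H1 H2 = MEC M := by
  have h : MEC M ∈ {v : ℕ | ∃ H1 H2 : Hap m, DM M H1 H2 = v} :=
    Nat.sInf_mem ⟨DM M (fun _ => false) (fun _ => false), fun _ => false, fun _ => false, rfl⟩
  exact h

/-- DFN correctness: if MEC(M) = d and M' is obtained from the n×m matrix M by making
m+1 copies of every row, then for any r ∈ {0,1}^m,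
`MEC(M' ∪ {r}) = (m+1)d + min over (H₁,H₂) ∈ OptPairs(M) of min(d(r,H₁), d(r,H₂))`. -/
theorem MEC_replicate_add_row {m : ℕ} (M : Multiset (Row m)) (d : ℕ)
    (hd : MEC M = d) (r : Hap m) :
    MEC ((fun j => some (r j)) ::ₘ (m + 1) • M)
      = (m + 1) * d +
        sInf {v : ℕ | ∃ p ∈ OptPairs M,
          min (dist (fun j => some (r j)) p.1) (dist (fun j => some (r j)) p.2) = v} := by
  set rr : Row m := (fun j => some (r j)) with hrr
  obtain ⟨H1, H2, hH⟩ := MEC_mem M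
  set T := {v : ℕ | ∃ p ∈ OptPairs M, min (dist rr p.1) (dist rr p.2) = v} with hT
  have hTne : T.Nonempty := ⟨_, ⟨(H1, H2), hH, rfl⟩⟩
  obtain ⟨p, hp, hpc⟩ := Nat.sInf_mem hTne
  have hcle : sInf T ≤ m := by
    rw [← hpc]; exact le_trans (min_le_left _ _) (dist_le _ _)
  have hpd : DM M p.1 p.2 = d := by rw [hp, hd]
  apply le_antisymm
  · have hval : DM (rr ::ₘ (m + 1) • M) p.1 p.2 = (m + 1) * d + sInf T := by
      rw [DM_cons, DM_smul, hpd, hpc]; omega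
    exact Nat.sInf_le ⟨p.1, p.2, hval⟩
  · refine le_csInf ⟨_, p.1, p.2, rfl⟩ ?_
    rintro b ⟨G1, G2, rfl⟩
    rw [DM_cons, DM_smul]
    have hge : d ≤ DM M G1 G2 := hd ▸ Nat.sInf_le ⟨G1, G2, rfl⟩
    by_cases h : DM M G1 G2 = d
    · have hmem : min (dist rr G1) (dist rr G2) ∈ T :=
        ⟨(G1, G2), by simp only [OptPairs, Set.mem_setOf_eq, h, hd], rfl⟩
      have := Nat.sInf_le hmem
      rw [h]
      omega
    · have h1 : d + 1 ≤ DM M G1 G2 := lt_of_le_of_ne hge (Ne.symm h)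
      have h2 : (m + 1) * (d + 1) ≤ (m + 1) * DM M G1 G2 :=
        Nat.mul_le_mul_left _ h1
      have h3 : (m + 1) * (d + 1) = (m + 1) * d + (m + 1) := by ring
      omega
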